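/- Let N be a CCI-envelope of a CCI X of size k ≥ 4 with Y = E(N)\X. If (J; X₁, X₂) is a hyperplane-partition and (J*; X₀*, ...) is a cohyperplane-partition with J* ≠ J, then |X₁ ∩ X₀*| ≠ |X₁| − 1 and |X₂ ∩ X₀*| ≠ |X₂| − 1. -/

import Mathlib

open Set

namespace Matroid

variable {α : Type*}

/-- A circuit: a minimal dependent set. -/
def IsCircuit' (M : Matroid α) (C : Set α) : Prop :=
  C ⊆ M.E ∧ ¬ M.Indep C ∧ ∀ D, D ⊂ C → M.Indep D

/-- A cocircuit: a circuit of the dual matroid. -/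
def IsCocircuit' (M : Matroid α) (C : Set α) : Prop :=
  M✶.IsCircuit' C

/-- A circuit-cocircuit intersection (CCI). -/
def IsCCI (M : Matroid α) (X : Set α) : Prop :=
  ∃ C K, M.IsCircuit' C ∧ M.IsCocircuit' K ∧ X = C ∩ K

/-- A hyperplane: a maximal proper flat. -/
def IsHyperplane (M : Matroid α) (H : Set α) : Prop :=
  M.IsFlat H ∧ H ≠ M.E ∧ ∀ F, M.IsFlat F → H ⊂ F → F = M.E

/-- The rank of a set: the largest size of an independent subset. -/
noncomputable def rk (M : Matroid α) (A : Set α) : ℕ :=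
  sSup {n | ∃ I, I ⊆ A ∧ M.Indep I ∧ I.ncard = n}

/-- The rank of a matroid. -/
noncomputable def rank (M : Matroid α) : ℕ := M.rk M.E

/-- Deletion of a set from a matroid. -/
def del (M : Matroid α) (D : Set α) : Matroid α := M.restrict (M.E \ D)

/-- Contraction of a set in a matroid. -/
def con (M : Matroid α) (C : Set α) : Matroid α := (M✶.restrict (M.E \ C))✶

/-- `N` is a minor of `M` if it is obtained by a contraction followed by a deletion. -/
def IsMinor' (N M : Matroid α) : Prop := ∃ C D, N = (M.con C).del D

end Matroid

open Matroid

section Aux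

variable {α : Type*} {M : Matroid α} {H C : Set α}

lemma flat_closure (M : Matroid α) (X : Set α) : M.IsFlat (M.closure X) := by
  rw [Matroid.closure_def]
  have hne : Nonempty {F // M.IsFlat F ∧ X ∩ M.E ⊆ F} :=
    ⟨⟨M.E, M.ground_isFlat, inter_subset_right⟩⟩
  have h := Matroid.IsFlat.iInter (M := M)
    (Fs := fun F : {F // M.IsFlat F ∧ X ∩ M.E ⊆ F} => F.1) (fun F => F.2.1)
  convert h using 1
  rw [sInter_eq_iInter]
  rfl

/-- A circuit and a hyperplane cannot satisfy `C \ H = {x}`. -/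
lemma circuit_hyp {x : α} (hH : M.IsHyperplane H) (hC : M.IsCircuit' C)
    (hx : C \ H = {x}) : False := by
  have hxC : x ∈ C \ H := hx ▸ rfl
  have hsub : C \ {x} ⊆ H := by
    intro c hc
    by_contra hcH
    have : c ∈ C \ H := ⟨hc.1, hcH⟩
    rw [hx] at this
    exact hc.2 this
  have hind : M.Indep (C \ {x}) := hC.2.2 _ (Set.sdiff_singleton_ssubset.2 hxC.1)
  have hdep : M.Dep (insert x (C \ {x})) := by
    rw [Set.insert_diff_singleton, Set.insert_eq_self.2 hxC.1]
    exact ⟨hC.2.1, hC.1⟩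
  have hxcl : x ∈ M.closure (C \ {x}) := hind.mem_closure_iff.2 (Or.inl hdep)
  have : x ∈ H := by
    have h1 : M.closure (C \ {x}) ⊆ M.closure H := M.closure_subset_closure hsub
    rw [hH.1.closure] at h1
    exact h1 hxcl
  exact hxC.2 this

/-- The complement of a hyperplane is a circuit of the dual. -/
lemma compl_hyp_circuit (hH : M.IsHyperplane H) : M✶.IsCircuit' (M.E \ H) := by
  have hHE : H ⊆ M.E := hH.1.subset_ground
  refine ⟨by rw [dual_ground]; exact diff_subset, ?_, ?_⟩
  · intro hind
    have hsp : M.Spanning H := by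
      have := (coindep_iff_compl_spanning (M := M) (I := M.E \ H) diff_subset).1 hind
      rwa [diff_diff_cancel_left hHE] at this
    exact hH.2.1 (by rw [← hH.1.closure]; exact hsp.closure_eq)
  · intro D hD
    have hDE : D ⊆ M.E := hD.subset.trans diff_subset
    rw [show (M✶.Indep D) = M.Coindep D from rfl, coindep_iff_compl_spanning hDE]
    obtain ⟨z, hz1, hz2⟩ := exists_of_ssubset hD
    have hHss : H ⊂ M.E \ D := by
      constructor
      · intro a ha
        refine ⟨hHE ha, fun haD => ?_⟩
        exact (hD.subset haD).2 ha
      · intro hcon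
        exact hz1.2 (hcon ⟨hz1.1, hz2⟩)
    have hF : M.IsFlat (M.closure (M.E \ D)) := flat_closure M _
    have hss : H ⊂ M.closure (M.E \ D) :=
      hHss.trans_subset (M.subset_closure _ diff_subset)
    have := hH.2.2 _ hF hss
    exact ⟨this, diff_subset⟩

/-- If `J ∪ X₂` is a hyperplane where `J` is too small, then `X₂` is nonempty. -/
lemma block_nonempty (N : Matroid α) (k : ℕ) (hk : 4 ≤ k)
    (hEfin : N.E.Finite) (hE : N.E.ncard = 2 * k - 2)
    (X : Set α) (hXE : X ⊆ N.E) (hXcard : X.ncard = k)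
    (hXcc : N✶.IsCircuit' X)
    (J X₂ : Set α) (hJ : J ⊆ N.E \ X) (hJcard : J.ncard = k - 3)
    (hH : N.IsHyperplane (J ∪ X₂)) : X₂.Nonempty := by
  rw [Set.nonempty_iff_ne_empty]
  intro h0
  rw [h0, union_empty] at hH
  have hC := compl_hyp_circuit hH
  have hJE : J ⊆ N.E := hJ.trans diff_subset
  have hss : X ⊂ N.E \ J := by
    constructor
    · intro a ha
      exact ⟨hXE ha, fun hj => (hJ hj).2 ha⟩
    · intro hcon
      have hcc : (N.E \ J).ncard = N.E.ncard - J.ncard :=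
        Set.ncard_diff hJE (hEfin.subset hJE)
      have hle := Set.ncard_le_ncard hcon (hEfin.subset hXE)
      omega
  exact hXcc.2.1 (hC.2.2 X hss)

/-- Key step: a hyperplane `J ∪ X₁` forbids `|X₂ ∩ X₀st| = |X₂| - 1`. -/
lemma key (N : Matroid α) (k : ℕ) (hk : 4 ≤ k)
    (hEfin : N.E.Finite) (hE : N.E.ncard = 2 * k - 2)
    (X : Set α) (hXE : X ⊆ N.E) (hXcard : X.ncard = k)
    (J X₁ X₂ : Set α) (hJ : J ⊆ N.E \ X) (hJcard : J.ncard = k - 3)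
    (hX₁₂ : X₁ ∪ X₂ = X) (hdisj : Disjoint X₁ X₂)
    (hH₁ : N.IsHyperplane (J ∪ X₁))
    (Jst X₀st : Set α) (hJst : Jst ⊆ N.E \ X) (hJstcard : Jst.ncard = k - 3)
    (hX₀st : X₀st ⊆ X)
    (hC : N.IsCircuit' (N.E \ (Jst ∪ X₀st)))
    (hne : Jst ≠ J) (hX₂ne : X₂.Nonempty) :
    (X₂ ∩ X₀st).ncard ≠ X₂.ncard - 1 := by
  intro h
  have hX₂X : X₂ ⊆ X := hX₁₂ ▸ subset_union_right
  have hX₂E : X₂ ⊆ N.E := hX₂X.trans hXE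
  have hX₂fin : X₂.Finite := hEfin.subset hX₂E
  -- `X₂ \ X₀st` is a singleton
  have h1 : (X₂ \ X₀st).ncard = 1 := by
    have e1 : X₂ \ X₀st = X₂ \ (X₂ ∩ X₀st) := (Set.diff_self_inter).symm
    have e2 : (X₂ \ (X₂ ∩ X₀st)).ncard = X₂.ncard - (X₂ ∩ X₀st).ncard :=
      Set.ncard_diff inter_subset_left (hX₂fin.subset inter_subset_left)
    have hpos : 0 < X₂.ncard := (Set.ncard_pos hX₂fin).2 hX₂ne
    rw [e1, e2, h]
    omega
  obtain ⟨x, hx⟩ := Set.ncard_eq_one.1 h1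
  -- card facts about Y = N.E \ X
  have hXfin : X.Finite := hEfin.subset hXE
  have hYcard : (N.E \ X).ncard = N.E.ncard - X.ncard := Set.ncard_diff hXE hXfin
  have hYfin : (N.E \ X).Finite := hEfin.diff
  have hYJ : ((N.E \ X) \ J).ncard = 1 := by
    have := Set.ncard_diff hJ (hYfin.subset hJ)
    omega
  have hYJst : ((N.E \ X) \ Jst).ncard = 1 := by
    have := Set.ncard_diff hJst (hYfin.subset hJst)
    omega
  obtain ⟨y, hy⟩ := Set.ncard_eq_one.1 hYJ
  obtain ⟨y', hy'⟩ := Set.ncard_eq_one.1 hYJst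
  -- the key set identity
  have heq : (N.E \ (Jst ∪ X₀st)) \ (J ∪ X₁) = X₂ \ X₀st := by
    ext t
    constructor
    · rintro ⟨⟨htE, htJ0⟩, htJ1⟩
      by_cases htX : t ∈ X
      · refine ⟨?_, fun h0 => htJ0 (Or.inr h0)⟩
        rw [← hX₁₂] at htX
        rcases htX with h' | h'
        · exact absurd (Or.inr h') htJ1
        · exact h'
      · exfalso
        have ht1 : t ∈ (N.E \ X) \ J := ⟨⟨htE, htX⟩, fun hh => htJ1 (Or.inl hh)⟩
        have ht2 : t ∈ (N.E \ X) \ Jst := ⟨⟨htE, htX⟩, fun hh => htJ0 (Or.inl hh)⟩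
        rw [hy] at ht1
        rw [hy'] at ht2
        apply hne
        calc Jst = (N.E \ X) \ ((N.E \ X) \ Jst) := (Set.diff_diff_cancel_left hJst).symm
          _ = (N.E \ X) \ ((N.E \ X) \ J) := by
            rw [hy, hy', show y' = y from
              (mem_singleton_iff.1 ht2).symm.trans (mem_singleton_iff.1 ht1)]
          _ = J := Set.diff_diff_cancel_left hJ
    · rintro ⟨ht2, ht0⟩
      have htX : t ∈ X := hX₂X ht2
      refine ⟨⟨hXE htX, ?_⟩, ?_⟩
      · rintro (hh | hh)
        · exact (hJst hh).2 htX
        · exact ht0 hh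
      · rintro (hh | hh)
        · exact (hJ hh).2 htX
        · exact (hdisj.ne_of_mem hh ht2) rfl
  exact circuit_hyp hH₁ hC (heq.trans hx)

end Aux

theorem stmt_11 {α : Type*} (N : Matroid α) (k : ℕ) (hk : 4 ≤ k)
    (hE : N.E.ncard = 2 * k - 2) (hr : N.rank = k - 1) (hr' : N✶.rank = k - 1)
    (X : Set α) (hXcard : X.ncard = k)
    (hXc : N.IsCircuit' X) (hXcc : N.IsCocircuit' X)
    (J X₁ X₂ : Set α) (hJ : J ⊆ N.E \ X) (hJcard : J.ncard = k - 3)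
    (hX₁₂ : X₁ ∪ X₂ = X) (hdisj : Disjoint X₁ X₂)
    (hH₁ : N.IsHyperplane (J ∪ X₁)) (hH₂ : N.IsHyperplane (J ∪ X₂))
    (Jst X₀st : Set α) (hJst : Jst ⊆ N.E \ X) (hJstcard : Jst.ncard = k - 3)
    (hX₀st : X₀st ⊆ X) (hX₀stne : X₀st.Nonempty)
    (hHst : N✶.IsHyperplane (Jst ∪ X₀st))
    (hne : Jst ≠ J) :
    (X₁ ∩ X₀st).ncard ≠ X₁.ncard - 1 ∧ (X₂ ∩ X₀st).ncard ≠ X₂.ncard - 1 := by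
  have hEfin : N.E.Finite := by
    rcases Set.finite_or_infinite N.E with h | h
    · exact h
    · exfalso
      rw [h.ncard] at hE
      omega
  have hXE : X ⊆ N.E := hXc.1
  have hCdual : N.IsCircuit' (N.E \ (Jst ∪ X₀st)) := by
    have h := compl_hyp_circuit hHst
    rwa [Matroid.dual_dual, Matroid.dual_ground] at h
  have h1 : X₁.Nonempty :=
    block_nonempty N k hk hEfin hE X hXE hXcard hXcc J X₁ hJ hJcard hH₁
  have h2 : X₂.Nonempty :=
    block_nonempty N k hk hEfin hE X hXE hXcard hXcc J X₂ hJ hJcard hH₂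
  constructor
  · exact key N k hk hEfin hE X hXE hXcard J X₂ X₁ hJ hJcard
      (by rw [union_comm]; exact hX₁₂) hdisj.symm hH₂ Jst X₀st hJst hJstcard hX₀st
      hCdual hne h1
  · exact key N k hk hEfin hE X hXE hXcard J X₁ X₂ hJ hJcard hX₁₂ hdisj hH₁
      Jst X₀st hJst hJstcard hX₀st hCdual hne h2
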